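/- Let X and Y be real random variables with finite means, residual life quantile functions F_t^{-1} and G_t^{-1}, and right support endpoints u_X, u_Y; set H_t(u) = G_t^{-1}(u) - F_t^{-1}(u) and L_t(p) = ∫_p^1 H_t(u) du. Suppose that for every t < u_X, u_Y either (i) F_t^{-1}(p) ≤ G_t^{-1}(p) for all p ∈ (0,1), or (ii) there exists p_t ∈ (0,1) such that L_t(p) ≥ 0 for all p ∈ [p_t, 1); and suppose p_0 := sup{p_t : t satisfies (ii)} ∈ (0,1). Then X ≤_{p_0-tvar-rl} Y. -/

import Mathlib

open MeasureTheory ProbabilityTheory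
open Set
open scoped ENNReal NNReal

/-- The quantile (Value at Risk) of a distribution function `F` at level `p`:
`F^{-1}(p) = inf {x : F x ≥ p}`. -/
noncomputable def quantile (F : ℝ → ℝ) (p : ℝ) : ℝ := sInf {x : ℝ | p ≤ F x}

/-- The distribution function of the residual life `X_t = [X - t ∣ X > t]`:
`F_t(x) = (F(x+t) - F(t))/(1 - F(t))` for `x ≥ 0`, and `0` otherwise. -/
noncomputable def resCDF (F : ℝ → ℝ) (t : ℝ) (x : ℝ) : ℝ :=
  if 0 ≤ x then (F (x + t) - F t) / (1 - F t) else 0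

/-- The quantile function of the residual life `X_t`. -/
noncomputable def resQuantile (F : ℝ → ℝ) (t : ℝ) (p : ℝ) : ℝ :=
  quantile (resCDF F t) p

section Aux

variable {μ : Measure ℝ} [IsProbabilityMeasure μ] {t : ℝ}

lemma ofReal_one_sub_cdf (μ : Measure ℝ) [IsProbabilityMeasure μ] (y : ℝ) :
    ENNReal.ofReal (1 - cdf μ y) = μ (Ioi y) := by
  rw [← compl_Iic, measure_compl measurableSet_Iic (measure_ne_top μ _), measure_univ,
    ← ofReal_cdf, ENNReal.ofReal_sub _ (cdf_nonneg μ y), ENNReal.ofReal_one]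

lemma tail_lintegral_lt_top (hμ : Integrable id μ) (a : ℝ) :
    ∫⁻ x in Ioi (0:ℝ), μ (Ioi (x + a)) < ⊤ := by
  have f_nn : 0 ≤ᵐ[μ] fun ω => max (ω - a) 0 := ae_of_all _ fun ω => le_max_right _ _
  have f_mble : AEMeasurable (fun ω : ℝ => max (ω - a) 0) μ :=
    ((measurable_id.sub measurable_const).max measurable_const).aemeasurable
  have key := lintegral_eq_lintegral_meas_lt μ f_nn f_mble
  have hsets : ∫⁻ x in Ioi (0:ℝ), μ (Ioi (x + a))
      = ∫⁻ x in Ioi (0:ℝ), μ {ω : ℝ | x < max (ω - a) 0} := by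
    refine setLIntegral_congr_fun measurableSet_Ioi (fun x hx => ?_)
    congr 1
    ext ω
    simp only [mem_Ioi, mem_setOf_eq, lt_max_iff]
    constructor
    · intro h; left; linarith
    · rintro (h | h)
      · linarith
      · exact absurd (mem_Ioi.mp hx) (not_lt.2 h.le)
  rw [hsets, ← key]
  have hbound : ∀ ω : ℝ, ENNReal.ofReal (max (ω - a) 0) ≤ ‖ω‖₊ + ENNReal.ofReal |a| := by
    intro ω
    have h1 : max (ω - a) 0 ≤ |ω| + |a| := by
      rcases le_total (ω - a) 0 with h | h
      · rw [max_eq_right h]; positivity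
      · rw [max_eq_left h]
        have := abs_sub_abs_le_abs_sub ω a
        have h2 := le_abs_self ω
        have h3 := neg_abs_le a
        linarith [le_abs_self (ω - a), abs_sub ω a]
    calc ENNReal.ofReal (max (ω - a) 0) ≤ ENNReal.ofReal (|ω| + |a|) :=
          ENNReal.ofReal_le_ofReal h1
      _ = ENNReal.ofReal |ω| + ENNReal.ofReal |a| := ENNReal.ofReal_add (abs_nonneg _) (abs_nonneg _)
      _ = ‖ω‖₊ + ENNReal.ofReal |a| := by rw [← Real.norm_eq_abs, ← coe_nnnorm, ENNReal.ofReal_coe_nnreal]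
  calc ∫⁻ ω, ENNReal.ofReal (max (ω - a) 0) ∂μ
      ≤ ∫⁻ ω, ((‖ω‖₊ : ℝ≥0∞) + ENNReal.ofReal |a|) ∂μ := lintegral_mono hbound
    _ = (∫⁻ ω, (‖ω‖₊ : ℝ≥0∞) ∂μ) + ENNReal.ofReal |a| * 1 := by
        rw [lintegral_add_right _ measurable_const, lintegral_const, measure_univ]
    _ < ⊤ := by
        have := hμ.hasFiniteIntegral
        rw [HasFiniteIntegral] at this
        exact ENNReal.add_lt_top.mpr ⟨this, by finiteness⟩

end Aux
section ResQ

variable {μ : Measure ℝ} [IsProbabilityMeasure μ] {t : ℝ}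

lemma resQuantile_nonneg (F : ℝ → ℝ) (t : ℝ) {u : ℝ} (hu : 0 < u) :
    0 ≤ resQuantile F t u := by
  apply Real.sInf_nonneg
  intro x hx
  by_contra h
  push_neg at h
  rw [mem_setOf_eq, resCDF, if_neg (not_le.2 h)] at hx
  linarith

lemma bddBelow_resSet (F : ℝ → ℝ) (t : ℝ) {u : ℝ} (hu : 0 < u) :
    BddBelow {x : ℝ | u ≤ resCDF F t x} := by
  refine ⟨0, fun x hx => ?_⟩
  by_contra h
  push_neg at h
  rw [mem_setOf_eq, resCDF, if_neg (not_le.2 h)] at hx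
  linarith

lemma mem_resSet_iff (ht : cdf μ t < 1) {x : ℝ} (hx : 0 ≤ x) {u : ℝ} :
    u ≤ resCDF (fun y => cdf μ y) t x ↔ cdf μ t + u * (1 - cdf μ t) ≤ cdf μ (x + t) := by
  have hd : (0:ℝ) < 1 - cdf μ t := by linarith
  rw [resCDF, if_pos hx, le_div_iff₀ hd]
  constructor <;> intro h <;> nlinarith

lemma resSet_nonempty (ht : cdf μ t < 1) {u : ℝ} (hu : u < 1) :
    {x : ℝ | u ≤ resCDF (fun y => cdf μ y) t x}.Nonempty := by
  have hd : (0:ℝ) < 1 - cdf μ t := by linarith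
  have hc : cdf μ t + u * (1 - cdf μ t) < 1 := by nlinarith
  obtain ⟨y, hy⟩ := ((tendsto_cdf_atTop μ).eventually (eventually_gt_nhds hc)).exists
  refine ⟨max (y - t) 0, ?_⟩
  rw [mem_setOf_eq, mem_resSet_iff ht (le_max_right _ _)]
  refine le_trans hy.le (monotone_cdf μ ?_)
  have := le_max_left (y - t) 0
  linarith

lemma resQuantile_monotoneOn (ht : cdf μ t < 1) {p : ℝ} (hp : 0 < p) :
    MonotoneOn (resQuantile (fun y => cdf μ y) t) (Ioo p 1) := by
  intro u hu v hv huv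
  apply csInf_le_csInf (bddBelow_resSet _ _ (hp.trans hu.1)) (resSet_nonempty ht hv.2)
  intro x hx
  exact le_trans huv hx

lemma resQuantile_le_of_mem (F : ℝ → ℝ) (t : ℝ) {u x : ℝ} (hu : 0 < u)
    (hx : u ≤ resCDF F t x) : resQuantile F t u ≤ x :=
  csInf_le (bddBelow_resSet F t hu) hx

lemma resQuantile_integrableOn (hμ : Integrable id μ) (ht : cdf μ t < 1)
    {p : ℝ} (hp : 0 < p) :
    IntegrableOn (resQuantile (fun y => cdf μ y) t) (Ioo p 1) volume := by
  set F : ℝ → ℝ := fun y => cdf μ y with hF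
  set R : ℝ → ℝ := resQuantile F t with hR
  have hd : (0:ℝ) < 1 - cdf μ t := by linarith
  have hmeas : AEMeasurable R (volume.restrict (Ioo p 1)) :=
    aemeasurable_restrict_of_monotoneOn measurableSet_Ioo (resQuantile_monotoneOn ht hp)
  have hnn : 0 ≤ᵐ[volume.restrict (Ioo p 1)] R :=
    (ae_restrict_mem measurableSet_Ioo).mono fun u hu =>
      resQuantile_nonneg F t (hp.trans hu.1)
  refine ⟨hmeas.aestronglyMeasurable, ?_⟩
  rw [hasFiniteIntegral_iff_ofReal hnn, lintegral_eq_lintegral_meas_lt _ hnn hmeas]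
  have hbd : ∀ x ∈ Ioi (0:ℝ), (volume.restrict (Ioo p 1)) {u : ℝ | x < R u}
      ≤ μ (Ioi (x + t)) / ENNReal.ofReal (1 - cdf μ t) := by
    intro x hx
    have hx0 : (0:ℝ) < x := hx
    set a : ℝ := resCDF F t x with ha
    have hsub : {u : ℝ | x < R u} ⊆ (Ioo p 1)ᶜ ∪ Ioi a := by
      intro u hu
      rcases em (u ∈ Ioo p 1) with h | h
      · right
        rw [mem_Ioi]
        by_contra hle
        push_neg at hle
        exact absurd (resQuantile_le_of_mem F t (hp.trans h.1) hle) (not_le.2 hu)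
      · exact Or.inl h
    calc (volume.restrict (Ioo p 1)) {u : ℝ | x < R u}
        ≤ (volume.restrict (Ioo p 1)) ((Ioo p 1)ᶜ ∪ Ioi a) := measure_mono hsub
      _ = volume (((Ioo p 1)ᶜ ∪ Ioi a) ∩ Ioo p 1) :=
          Measure.restrict_apply (measurableSet_Ioo.compl.union measurableSet_Ioi)
      _ ≤ volume (Ioo a 1) := by
          apply measure_mono
          rintro u ⟨h1, h2⟩
          rcases h1 with h1 | h1
          · exact absurd h2 h1
          · exact ⟨h1, h2.2⟩
      _ = ENNReal.ofReal (1 - a) := by rw [Real.volume_Ioo]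
      _ = μ (Ioi (x + t)) / ENNReal.ofReal (1 - cdf μ t) := by
          have hax : 1 - a = (1 - cdf μ (x + t)) / (1 - cdf μ t) := by
            rw [ha, resCDF, if_pos hx0.le]
            simp only [hF]
            field_simp [hd.ne']
            ring
          rw [hax, ENNReal.ofReal_div_of_pos hd, ofReal_one_sub_cdf]
  calc ∫⁻ x in Ioi (0:ℝ), (volume.restrict (Ioo p 1)) {u : ℝ | x < R u}
      ≤ ∫⁻ x in Ioi (0:ℝ), μ (Ioi (x + t)) / ENNReal.ofReal (1 - cdf μ t) :=
        setLIntegral_mono_ae' measurableSet_Ioi (ae_of_all _ hbd)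
    _ = (ENNReal.ofReal (1 - cdf μ t))⁻¹ * ∫⁻ x in Ioi (0:ℝ), μ (Ioi (x + t)) := by
        simp_rw [ENNReal.div_eq_inv_mul]
        exact lintegral_const_mul' _ _ (ENNReal.inv_ne_top.2 (ENNReal.ofReal_pos.2 hd).ne')
    _ < ⊤ := ENNReal.mul_lt_top (ENNReal.inv_lt_top.2 (ENNReal.ofReal_pos.2 hd))
        (tail_lintegral_lt_top hμ t)

lemma resQuantile_intervalIntegrable (hμ : Integrable id μ) (ht : cdf μ t < 1)
    {p : ℝ} (hp : 0 < p) (hp1 : p < 1) :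
    IntervalIntegrable (resQuantile (fun y => cdf μ y) t) volume p 1 := by
  rw [intervalIntegrable_iff_integrableOn_Ioo_of_le hp1.le]
  exact resQuantile_integrableOn hμ ht hp

end ResQ

/-- `X ≤_{p₀-tvar-rl} Y`, expressed through the distribution functions `F` of `X` and `G` of `Y`:
`∫_p^1 F_t^{-1}(u) du ≤ ∫_p^1 G_t^{-1}(u) du` for all `p ∈ [p₀, 1)` and all `t` below the right
endpoints of the supports of `X` and `Y` (equivalently, `F t < 1` and `G t < 1`). -/
def TvarRlLE (F G : ℝ → ℝ) (p₀ : ℝ) : Prop :=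
  ∀ t : ℝ, F t < 1 → G t < 1 → ∀ p ∈ Set.Ico p₀ 1,
    (∫ u in p..1, resQuantile F t u) ≤ ∫ u in p..1, resQuantile G t u

/-- Sufficient conditions for the `p₀-tvar-rl` order: if for every `t` below the right endpoints
of both supports either (i) `F_t^{-1}(p) ≤ G_t^{-1}(p)` for all `p ∈ (0,1)`, or (ii) there is
`p_t ∈ (0,1)` with `L_t(p) = ∫_p^1 (G_t^{-1}(u) - F_t^{-1}(u)) du ≥ 0` for all `p ∈ [p_t, 1)`,
and `p₀ := sup{p_t : t satisfies (ii)}` lies in `(0,1)`, then `X ≤_{p₀-tvar-rl} Y`. -/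
theorem stmt15 (μ ν : Measure ℝ) [IsProbabilityMeasure μ] [IsProbabilityMeasure ν]
    (hμ : Integrable id μ) (hν : Integrable id ν)
    (pt : ℝ → ℝ) (p₀ : ℝ)
    (hT : ∀ t : ℝ, cdf μ t < 1 → cdf ν t < 1 →
      (∀ p ∈ Set.Ioo (0 : ℝ) 1,
        resQuantile (fun x => cdf μ x) t p ≤ resQuantile (fun x => cdf ν x) t p) ∨
      (pt t ∈ Set.Ioo (0 : ℝ) 1 ∧ ∀ p ∈ Set.Ico (pt t) 1,
        0 ≤ ∫ u in p..1,
          (resQuantile (fun x => cdf ν x) t u - resQuantile (fun x => cdf μ x) t u)))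
    (hp₀ : p₀ = sSup {q : ℝ | ∃ t : ℝ, cdf μ t < 1 ∧ cdf ν t < 1 ∧
      (pt t ∈ Set.Ioo (0 : ℝ) 1 ∧ ∀ p ∈ Set.Ico (pt t) 1,
        0 ≤ ∫ u in p..1,
          (resQuantile (fun x => cdf ν x) t u - resQuantile (fun x => cdf μ x) t u)) ∧
      q = pt t})
    (hp₀mem : p₀ ∈ Set.Ioo (0 : ℝ) 1) :
    TvarRlLE (fun x => cdf μ x) (fun x => cdf ν x) p₀ := by
  intro t hF hG p hp
  have hppos : 0 < p := hp₀mem.1.trans_le hp.1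
  have hplt : p < 1 := hp.2
  have IF := resQuantile_intervalIntegrable hμ hF hppos hplt
  have IG := resQuantile_intervalIntegrable hν hG hppos hplt
  rcases hT t hF hG with hcase | ⟨hptmem, hL⟩
  · rw [intervalIntegral.integral_of_le hplt.le, intervalIntegral.integral_of_le hplt.le,
      setIntegral_congr_set Ioo_ae_eq_Ioc.symm,
      setIntegral_congr_set (Ioo_ae_eq_Ioc (a := p) (b := (1:ℝ))).symm]
    exact setIntegral_mono_on (resQuantile_integrableOn hμ hF hppos)
      (resQuantile_integrableOn hν hG hppos) measurableSet_Ioo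
      (fun u hu => hcase u ⟨hppos.trans hu.1, hu.2⟩)
  · have hpt_le : pt t ≤ p₀ := by
      rw [hp₀]
      refine le_csSup ⟨1, ?_⟩ ⟨t, hF, hG, ⟨hptmem, hL⟩, rfl⟩
      rintro q ⟨t', _, _, ⟨hmem', _⟩, rfl⟩
      exact hmem'.2.le
    have h0 := hL p ⟨hpt_le.trans hp.1, hplt⟩
    rw [intervalIntegral.integral_sub IG IF] at h0
    linarith
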